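/- arXiv:2602.07556 — 6 statements merged into one kernel-verified Lean document; each statement's English description precedes it below -/
import Mathlib

section
/- Let Q be a finite abelian group of odd order and let t be an automorphism of Q with t∘t = id and t ≠ id. Then there exists an element q ∈ Q with q ≠ 1 and t(q) = q⁻¹. -/
/-- A nontrivial automorphism of order dividing 2 of a finite abelian group of odd order
inverts some nontrivial element. -/
theorem stmt_3 {Q : Type*} [CommGroup Q] [Finite Q] (hodd : Odd (Nat.card Q))
    (t : Q ≃* Q) (ht2 : ∀ q : Q, t (t q) = q) (htne : t ≠ MulEquiv.refl Q) :
    ∃ q : Q, q ≠ 1 ∧ t q = q⁻¹ := by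
  have : ∃ x : Q, t x ≠ x := by
    by_contra h
    push_neg at h
    exact htne (MulEquiv.ext fun x => h x)
  obtain ⟨x, hx⟩ := this
  refine ⟨x * (t x)⁻¹, ?_, ?_⟩
  · intro h
    apply hx
    have := mul_inv_eq_one.mp h
    exact this.symm
  · rw [map_mul, map_inv, ht2, mul_inv_rev, inv_inv, mul_comm]
end

section
/- Let Ĝ be a finite group, p an odd prime, and Q a normal elementary abelian p-subgroup of Ĝ. Let D be a conjugacy class of involutions of Ĝ such that the product of any two elements of D has order at most 6. If some element of D does not centralize Q, then p = 3 or p = 5. -/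
/-- If `Q` is a normal elementary abelian `p`-subgroup (`p` an odd prime) of a finite group,
`D` is a conjugacy class of involutions forming 6-transpositions, and some element of `D`
does not centralize `Q`, then `p = 3` or `p = 5`. -/
theorem stmt_4 {G : Type*} [Group G] [Finite G] (p : ℕ) (hp : p.Prime) (hpodd : Odd p)
    (Q : Subgroup G) (hQn : Q.Normal)
    (hQab : ∀ a b : Q, a * b = b * a)
    (hQelem : ∀ q ∈ Q, q ≠ 1 → orderOf q = p)
    (D : Set G) (hDcc : ∃ g : G, D = {x : G | IsConj g x})
    (hDinv : ∀ d ∈ D, orderOf d = 2)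
    (h6 : ∀ d₁ ∈ D, ∀ d₂ ∈ D, orderOf (d₁ * d₂) ≤ 6)
    (hnc : ∃ d ∈ D, ∃ q ∈ Q, d * q ≠ q * d) :
    p = 3 ∨ p = 5 := by
  obtain ⟨d, hdD, q, hqQ, hne⟩ := hnc
  have hd2 : d * d = 1 := by
    have := pow_orderOf_eq_one d
    rw [hDinv d hdD, sq] at this
    exact this
  have hdinv : d⁻¹ = d := by
    rw [eq_comm, eq_inv_iff_mul_eq_one, hd2]
  set d' := q * d * q⁻¹ with hd'
  have hd'D : d' ∈ D := by
    obtain ⟨g, hg⟩ := hDcc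
    rw [hg] at hdD ⊢
    exact hdD.trans (isConj_iff.mpr ⟨q, rfl⟩)
  have hx : d * d' = (d * q * d⁻¹) * q⁻¹ := by rw [hdinv]; simp [hd', mul_assoc]
  have hmem : d * d' ∈ Q := by
    rw [hx]; exact mul_mem (hQn.conj_mem q hqQ d) (inv_mem hqQ)
  have hne1 : d * d' ≠ 1 := by
    intro h
    rw [hx, mul_inv_eq_one] at h
    apply hne
    calc d * q = (d * q * d⁻¹) * d := by group
    _ = q * d := by rw [h]
  have hop : orderOf (d * d') = p := hQelem _ hmem hne1
  have hle : p ≤ 6 := hop ▸ h6 d hdD d' hd'D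
  obtain ⟨k, hk⟩ := hpodd
  have := hp.two_le
  omega
end

section
/- Let F be a field of characteristic different from 2, V a nonzero finite-dimensional F-vector space, G a group acting linearly on V via a representation ρ, and E ≤ G a subgroup isomorphic to the Klein four-group C₂ × C₂. Assume that (i) no nonzero vector of V is fixed by every element of E, and (ii) the three nontrivial elements of E are pairwise conjugate in G. Then dim V = 3k for some natural number k, and for each nontrivial e ∈ E the eigenspace of ρ(e) for eigenvalue 1 has dimension k while the eigenspace for eigenvalue −1 has dimension 2k. -/
open Module

section aux
variable {F V : Type*} [Field F] [AddCommGroup V] [Module F V]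

private lemma mem_eig_one {f : Module.End F V} {v : V} :
    v ∈ Module.End.eigenspace f 1 ↔ f v = v := by
  rw [Module.End.mem_eigenspace_iff, one_smul]

private lemma mem_eig_neg_one {f : Module.End F V} {v : V} :
    v ∈ Module.End.eigenspace f (-1) ↔ f v = -v := by
  rw [Module.End.mem_eigenspace_iff, neg_one_smul]

private lemma proj_fix {f : Module.End F V} (hf : ∀ v, f (f v) = v) (v : V) :
    f ((2⁻¹ : F) • (v + f v)) = (2⁻¹ : F) • (v + f v) := by
  rw [map_smul, map_add, hf, add_comm]

private lemma proj_neg {f : Module.End F V} (hf : ∀ v, f (f v) = v) (v : V) :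
    f ((2⁻¹ : F) • (v - f v)) = -((2⁻¹ : F) • (v - f v)) := by
  rw [map_smul, map_sub, hf, ← smul_neg, neg_sub]

private lemma proj_sum (hchar : (2 : F) ≠ 0) (f : Module.End F V) (v : V) :
    (2⁻¹ : F) • (v + f v) + (2⁻¹ : F) • (v - f v) = v := by
  rw [← smul_add]
  have h : v + f v + (v - f v) = (2 : F) • v := by rw [two_smul]; abel
  rw [h, smul_smul, inv_mul_cancel₀ hchar, one_smul]

private lemma half_smul_zero (hchar : (2 : F) ≠ 0) {w : V}
    (h : (2⁻¹ : F) • w = 0) : w = 0 := by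
  rcases smul_eq_zero.mp h with h' | h'
  · exact absurd h' (inv_ne_zero hchar)
  · exact h'

private lemma eig_inf_bot (hchar : (2 : F) ≠ 0) (f : Module.End F V) :
    Module.End.eigenspace f 1 ⊓ Module.End.eigenspace f (-1) = ⊥ := by
  rw [eq_bot_iff]
  rintro v ⟨h1, h2⟩
  rw [Submodule.mem_bot]
  rw [SetLike.mem_coe, mem_eig_one] at h1
  rw [SetLike.mem_coe, mem_eig_neg_one] at h2
  rw [h1] at h2
  have h3 : (2 : F) • v = 0 := by
    rw [two_smul]
    exact add_eq_zero_iff_eq_neg.mpr h2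
  rcases smul_eq_zero.mp h3 with h | h
  · exact absurd h hchar
  · exact h

private lemma eig_sup_top (hchar : (2 : F) ≠ 0) {f : Module.End F V}
    (hf : ∀ v, f (f v) = v) :
    Module.End.eigenspace f 1 ⊔ Module.End.eigenspace f (-1) = ⊤ := by
  rw [eq_top_iff]
  intro v _
  exact Submodule.mem_sup.mpr ⟨(2⁻¹ : F) • (v + f v), mem_eig_one.mpr (proj_fix hf v),
    (2⁻¹ : F) • (v - f v), mem_eig_neg_one.mpr (proj_neg hf v), proj_sum hchar f v⟩

private lemma invol_finrank [FiniteDimensional F V] (hchar : (2 : F) ≠ 0)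
    {f : Module.End F V} (hf : ∀ v, f (f v) = v) :
    finrank F (Module.End.eigenspace f 1) + finrank F (Module.End.eigenspace f (-1))
      = finrank F V := by
  have h := Submodule.finrank_sup_add_finrank_inf_eq
    (Module.End.eigenspace f 1) (Module.End.eigenspace f (-1))
  rw [eig_sup_top hchar hf, eig_inf_bot hchar f, finrank_bot, finrank_top] at h
  omega

private noncomputable def repEquiv {G : Type*} [Group G] (ρ : Representation F G V)
    (g : G) : V ≃ₗ[F] V :=
  LinearEquiv.ofLinear (ρ g) (ρ g⁻¹)
    (by ext v; simp [← Module.End.mul_apply, ← map_mul])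
    (by ext v; simp [← Module.End.mul_apply, ← map_mul])

private lemma eig_conj {G : Type*} [Group G] (ρ : Representation F G V) (g e : G) (μ : F) :
    Module.End.eigenspace (ρ (g * e * g⁻¹)) μ =
      (Module.End.eigenspace (ρ e) μ).map (ρ g) := by
  ext x
  simp only [Submodule.mem_map, Module.End.mem_eigenspace_iff]
  constructor
  · intro hx
    refine ⟨ρ g⁻¹ x, ?_, ?_⟩
    · have h : ρ e (ρ g⁻¹ x) = ρ g⁻¹ (ρ (g * e * g⁻¹) x) := by
        rw [← Module.End.mul_apply, ← map_mul, ← Module.End.mul_apply, ← map_mul]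
        group
      rw [h, hx, map_smul]
    · rw [← Module.End.mul_apply, ← map_mul, mul_inv_cancel, map_one, Module.End.one_apply]
  · rintro ⟨y, hy, rfl⟩
    have h : ρ (g * e * g⁻¹) (ρ g y) = ρ g (ρ e y) := by
      rw [← Module.End.mul_apply, ← map_mul, ← Module.End.mul_apply, ← map_mul]
      group
    rw [h, hy, map_smul]

private lemma eig_dim_conj {G : Type*} [Group G] (ρ : Representation F G V)
    [FiniteDimensional F V] {e e' : G} (h : IsConj e e') (μ : F) :
    finrank F (Module.End.eigenspace (ρ e') μ) = finrank F (Module.End.eigenspace (ρ e) μ) := by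
  obtain ⟨g, hg⟩ := isConj_iff.mp h
  rw [← hg, eig_conj]
  exact LinearEquiv.finrank_map_eq (repEquiv ρ g) _

private lemma core (hchar : (2 : F) ≠ 0) {f₁ f₂ : Module.End F V}
    (h₁ : ∀ v, f₁ (f₁ v) = v) (h₂ : ∀ v, f₂ (f₂ v) = v)
    (hcomm : ∀ v, f₁ (f₂ v) = f₂ (f₁ v))
    (hfix : ∀ v, f₁ v = v → f₂ v = v → v = 0) :
    Module.End.eigenspace (f₁ * f₂) 1
        = Module.End.eigenspace f₁ (-1) ⊓ Module.End.eigenspace f₂ (-1) ∧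
      Module.End.eigenspace f₁ (-1) ⊔ Module.End.eigenspace f₂ (-1) = ⊤ := by
  have hsub : ∀ u : V, f₁ u = u → f₂ u = -u := by
    intro u hu
    have hq1 : f₂ ((2⁻¹ : F) • (u + f₂ u)) = (2⁻¹ : F) • (u + f₂ u) := proj_fix h₂ u
    have hq2 : f₁ ((2⁻¹ : F) • (u + f₂ u)) = (2⁻¹ : F) • (u + f₂ u) := by
      rw [map_smul, map_add, hu, hcomm, hu]
    have hq0 : u + f₂ u = 0 := half_smul_zero hchar (hfix _ hq2 hq1)
    exact eq_neg_of_add_eq_zero_left (add_comm u (f₂ u) ▸ hq0)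
  constructor
  · ext v
    rw [mem_eig_one, Submodule.mem_inf, mem_eig_neg_one, mem_eig_neg_one,
      Module.End.mul_apply]
    constructor
    · intro hv
      have hfv : f₂ v = f₁ v := by
        calc f₂ v = f₂ (f₁ (f₂ v)) := by rw [hv]
          _ = f₁ (f₂ (f₂ v)) := (hcomm (f₂ v)).symm
          _ = f₁ v := by rw [h₂]
      have hp1 : f₁ ((2⁻¹ : F) • (v + f₁ v)) = (2⁻¹ : F) • (v + f₁ v) := proj_fix h₁ v
      have hp2 : f₂ ((2⁻¹ : F) • (v + f₁ v)) = (2⁻¹ : F) • (v + f₁ v) := by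
        rw [map_smul, map_add, hfv, ← hcomm, hv, add_comm (f₁ v) v]
      have hp0 : v + f₁ v = 0 := half_smul_zero hchar (hfix _ hp1 hp2)
      have h1v : f₁ v = -v := eq_neg_of_add_eq_zero_left (add_comm v (f₁ v) ▸ hp0)
      exact ⟨h1v, by rw [hfv, h1v]⟩
    · rintro ⟨hv1, hv2⟩
      rw [hv2, map_neg, hv1, neg_neg]
  · rw [eq_top_iff]
    intro v _
    refine Submodule.mem_sup.mpr ⟨(2⁻¹ : F) • (v - f₁ v), ?_, (2⁻¹ : F) • (v + f₁ v), ?_, ?_⟩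
    · exact mem_eig_neg_one.mpr (proj_neg h₁ v)
    · exact mem_eig_neg_one.mpr (hsub _ (proj_fix h₁ v))
    · rw [add_comm]; exact proj_sum hchar f₁ v

end aux

/-- If a Klein four subgroup `E ≤ G` acts on a nonzero finite-dimensional vector space
(over a field of characteristic ≠ 2) with no nonzero fixed vectors and its three
involutions pairwise conjugate in `G`, then `dim V = 3k` and each nontrivial `e ∈ E`
has 1-eigenspace of dimension `k` and (−1)-eigenspace of dimension `2k`. -/
theorem stmt_5 {F V : Type*} [Field F] [AddCommGroup V] [Module F V]
    [FiniteDimensional F V] [Nontrivial V] (hchar : (2 : F) ≠ 0)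
    {G : Type*} [Group G] (ρ : Representation F G V)
    (E : Subgroup G) (hE : IsKleinFour E)
    (hfix : ∀ v : V, (∀ e ∈ E, ρ e v = v) → v = 0)
    (hconj : ∀ e₁ ∈ E, ∀ e₂ ∈ E, e₁ ≠ (1 : G) → e₂ ≠ (1 : G) → IsConj e₁ e₂) :
    ∃ k : ℕ, Module.finrank F V = 3 * k ∧
      ∀ e ∈ E, e ≠ (1 : G) →
        Module.finrank F (Module.End.eigenspace (ρ e) 1) = k ∧
        Module.finrank F (Module.End.eigenspace (ρ e) (-1)) = 2 * k := by
  classical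
  haveI := hE
  haveI := @Fintype.ofFinite ↥E IsKleinFour.instFinite
  have hcard : (Finset.univ : Finset ↥E).card = 4 := by
    rw [Finset.card_univ, IsKleinFour.card_four']
  obtain ⟨x₁, -, hx₁⟩ := Finset.exists_mem_ne
    (s := (Finset.univ : Finset ↥E)) (by rw [hcard]; norm_num) 1
  obtain ⟨x₂, hx₂mem, hx₂x₁⟩ := Finset.exists_mem_ne
    (s := Finset.univ.erase (1 : ↥E))
    (by rw [Finset.card_erase_of_mem (Finset.mem_univ 1), hcard]; norm_num) x₁
  have hx₂ : x₂ ≠ 1 := (Finset.mem_erase.mp hx₂mem).1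
  have he₁ : (x₁ : G) ∈ E := x₁.2
  have he₂ : (x₂ : G) ∈ E := x₂.2
  have he₃ : (x₁ : G) * x₂ ∈ E := mul_mem he₁ he₂
  have he₁1 : (x₁ : G) ≠ 1 := fun h => hx₁ (OneMemClass.coe_eq_one.mp h)
  have he₂1 : (x₂ : G) ≠ 1 := fun h => hx₂ (OneMemClass.coe_eq_one.mp h)
  have hx₃1 : x₁ * x₂ ≠ 1 := by
    intro h
    apply hx₂x₁
    have h2 : x₁ * (x₁ * x₂) = x₁ * 1 := by rw [h]
    rwa [← mul_assoc, IsKleinFour.mul_self, one_mul, mul_one] at h2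
  have he₃1 : (x₁ : G) * x₂ ≠ 1 := by
    intro h
    exact hx₃1 (OneMemClass.coe_eq_one.mp (by push_cast; exact h))
  -- involutions
  have hsq : ∀ x : ↥E, (x : G) * x = 1 := by
    intro x
    have h := congrArg (Subtype.val) (IsKleinFour.mul_self x)
    push_cast at h
    exact h
  have hinv : ∀ x : ↥E, ∀ v : V, ρ (x : G) (ρ (x : G) v) = v := by
    intro x v
    rw [← Module.End.mul_apply, ← map_mul, hsq, map_one, Module.End.one_apply]
  have hcommG : (x₁ : G) * x₂ = (x₂ : G) * x₁ := by
    have h := congrArg (Subtype.val) (mul_comm_of_exponent_two hE.exponent_two x₁ x₂)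
    push_cast at h
    exact h
  have hcomm : ∀ v : V, ρ (x₁ : G) (ρ (x₂ : G) v) = ρ (x₂ : G) (ρ (x₁ : G) v) := by
    intro v
    rw [← Module.End.mul_apply, ← map_mul, hcommG, map_mul, Module.End.mul_apply]
  -- no common fixed vectors of the two generators
  have hfix2 : ∀ v : V, ρ (x₁ : G) v = v → ρ (x₂ : G) v = v → v = 0 := by
    intro v h1 h2
    apply hfix
    intro e he
    have hmem : (⟨e, he⟩ : ↥E) ∈ ({x₁ * x₂, x₁, x₂, 1} : Finset ↥E) := by
      rw [IsKleinFour.eq_finset_univ hx₁ hx₂ (Ne.symm hx₂x₁)]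
      exact Finset.mem_univ _
    simp only [Finset.mem_insert, Finset.mem_singleton] at hmem
    rcases hmem with h | h | h | h
    · have he' : e = (x₁ : G) * x₂ := by
        have h3 := congrArg (Subtype.val) h
        push_cast at h3
        exact h3
      rw [he', map_mul, Module.End.mul_apply, h2, h1]
    · have he' : e = (x₁ : G) := congrArg (Subtype.val) h
      rw [he', h1]
    · have he' : e = (x₂ : G) := congrArg (Subtype.val) h
      rw [he', h2]
    · have he' : e = (1 : G) := by
        have h3 := congrArg (Subtype.val) h
        push_cast at h3
        exact h3
      rw [he', map_one, Module.End.one_apply]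
  obtain ⟨hEq, hTop⟩ := core hchar (hinv x₁) (hinv x₂) hcomm hfix2
  -- dimensions
  have hd₁ := invol_finrank hchar (hinv x₁)
  have hd₂ := invol_finrank hchar (hinv x₂)
  have ha₂ := eig_dim_conj ρ (hconj (x₁ : G) he₁ (x₂ : G) he₂ he₁1 he₂1) 1
  have ha₃ := eig_dim_conj ρ (hconj (x₁ : G) he₁ ((x₁ : G) * x₂) he₃ he₁1 he₃1) 1
  have hsum := Submodule.finrank_sup_add_finrank_inf_eq
    (Module.End.eigenspace (ρ (x₁ : G)) (-1)) (Module.End.eigenspace (ρ (x₂ : G)) (-1))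
  rw [hTop, finrank_top, ← hEq, ← map_mul] at hsum
  refine ⟨Module.finrank F (Module.End.eigenspace (ρ (x₁ : G)) 1), by omega, ?_⟩
  intro e he hne
  have hae := eig_dim_conj ρ (hconj (x₁ : G) he₁ e he he₁1 hne) 1
  have hde := invol_finrank (f := ρ e) hchar (fun v => hinv ⟨e, he⟩ v)
  exact ⟨hae, by omega⟩
end

section
/- Let V and G be finite groups with |V| odd, let φ : G → Aut(V) be an action of G on V, and form the semidirect product H = V ⋊_φ G. If any two elements of order 2 in G are conjugate in G, then any two elements of order 2 in H are conjugate in H. -/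
open SemidirectProduct

lemma aux6 {V G : Type*} [Group V] [Group G] [Finite V]
    (hV : Odd (Nat.card V)) (φ : G →* MulAut V)
    (h : V ⋊[φ] G) (hh : orderOf h = 2) :
    orderOf h.right = 2 ∧ IsConj (inr h.right : V ⋊[φ] G) h := by
  have hcop : (Nat.card V).Coprime 2 :=
    Nat.Coprime.symm ((Nat.prime_two.coprime_iff_not_dvd).mpr
      (fun hd => (Nat.not_even_iff_odd.mpr hV) (even_iff_two_dvd.mpr hd)))
  have hbij := hcop.pow_left_bijective
  have hsq : h * h = 1 := by
    rw [← sq, ← hh, pow_orderOf_eq_one]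
  set v := h.left
  set g := h.right
  have hg2 : g * g = 1 := by
    have := congrArg SemidirectProduct.right hsq
    simpa using this
  have hv : v * φ g v = 1 := by
    have := congrArg SemidirectProduct.left hsq
    simpa using this
  have hgne : g ≠ 1 := by
    intro hg1
    rw [hg1, map_one] at hv
    have hv2 : v ^ 2 = 1 := by simpa [sq] using hv
    have hv1 : v = 1 := by
      have := hbij.injective (a₁ := v) (a₂ := 1) (by simpa using hv2)
      simpa using this
    have : h = 1 := by
      ext
      · exact hv1
      · exact hg1
    rw [this] at hh
    simp at hh
  have hog : orderOf g = 2 := by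
    have : g ^ 2 = 1 := by simpa [sq] using hg2
    exact orderOf_eq_prime this hgne
  refine ⟨hog, ?_⟩
  obtain ⟨t, ht⟩ := hbij.surjective v
  simp only at ht
  have hσv : φ g v = v⁻¹ := ((inv_eq_of_mul_eq_one_right hv).symm)
  have hσt : φ g t = t⁻¹ := by
    apply hbij.injective
    show (φ g t) ^ 2 = (t⁻¹) ^ 2
    rw [← map_pow, ht, hσv, inv_pow, ht]
  rw [isConj_iff]
  refine ⟨inl t, ?_⟩
  have htt : t * t = v := by rw [← ht, sq]
  ext
  · simp [hσt, htt]; rfl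
  · simp; rfl

/-- Let `V`, `G` be finite groups with `|V|` odd and `H = V ⋊[φ] G`. If any two elements
of order 2 in `G` are conjugate in `G`, then any two elements of order 2 in `H` are
conjugate in `H`. -/
theorem stmt_6 {V G : Type*} [Group V] [Group G] [Finite V] [Finite G]
    (hV : Odd (Nat.card V)) (φ : G →* MulAut V)
    (hG : ∀ g₁ g₂ : G, orderOf g₁ = 2 → orderOf g₂ = 2 → IsConj g₁ g₂) :
    ∀ h₁ h₂ : V ⋊[φ] G, orderOf h₁ = 2 → orderOf h₂ = 2 → IsConj h₁ h₂ := by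
  intro h₁ h₂ o₁ o₂
  obtain ⟨og₁, hc₁⟩ := aux6 hV φ h₁ o₁
  obtain ⟨og₂, hc₂⟩ := aux6 hV φ h₂ o₂
  exact hc₁.symm.trans (((inr : G →* V ⋊[φ] G).map_isConj (hG _ _ og₁ og₂)).trans hc₂)
end

section
/- Let Ĝ be a finite group, S ≤ Ĝ a subgroup isomorphic to the dihedral group of order 8, and E ≤ S a subgroup isomorphic to the Klein four-group C₂ × C₂. Assume that (i) no involution of E is conjugate in Ĝ to any involution of S lying outside E, and (ii) the normalizer of S inside the normalizer N_Ĝ(E) of E equals S. Then S is a Sylow 2-subgroup of Ĝ. -/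
/-- Let `S ≤ Ĝ` be dihedral of order 8 and `E ≤ S` a Klein four subgroup. If no involution
of `E` is conjugate in `Ĝ` to an involution of `S` outside `E`, and the normalizer of `S`
inside the normalizer of `E` equals `S`, then `S` is a Sylow 2-subgroup of `Ĝ`. -/
theorem stmt_9 {G : Type*} [Group G] [Finite G] (S E : Subgroup G)
    (hS : Nonempty (S ≃* DihedralGroup 4)) (hE : IsKleinFour E) (hES : E ≤ S)
    (h1 : ∀ e ∈ E, orderOf e = 2 → ∀ s ∈ S, s ∉ E → orderOf s = 2 → ¬ IsConj e s)
    (h2 : Subgroup.normalizer (S : Set G) ⊓ Subgroup.normalizer (E : Set G) = S) :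
    ∃ P : Sylow 2 G, (P : Subgroup G) = S := by
  obtain ⟨φ⟩ := hS
  have hcard : Nat.card S = 8 := by
    rw [Nat.card_congr φ.toEquiv, DihedralGroup.nat_card]
  have hpS : IsPGroup 2 S := IsPGroup.of_card (n := 3) (by rw [hcard]; norm_num)
  obtain ⟨P, hSP⟩ := hpS.exists_le_sylow
  refine ⟨P, ?_⟩
  by_contra hne
  have hlt : S < (P : Subgroup G) := lt_of_le_of_ne hSP fun h => hne h.symm
  haveI : Fact (Nat.Prime 2) := ⟨Nat.prime_two⟩
  have hnil : Group.IsNilpotent (P : Subgroup G) := P.isPGroup'.isNilpotent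
  have hnc := normalizerCondition_of_isNilpotent (G := (P : Subgroup G))
  have hStop : S.subgroupOf (P : Subgroup G) < ⊤ := by
    rw [lt_top_iff_ne_top]
    intro h
    exact hne (le_antisymm (Subgroup.subgroupOf_eq_top.mp h) hSP)
  obtain ⟨t, htn, htS⟩ := SetLike.exists_of_lt (hnc _ hStop)
  -- `t` normalizes `S` in `G`
  have htnorm : (t : G) ∈ Subgroup.normalizer (S : Set G) := by
    rw [Subgroup.mem_normalizer_iff]
    intro h
    constructor
    · intro hh
      have := (Subgroup.mem_normalizer_iff.mp htn (⟨h, hSP hh⟩ : (P : Subgroup G))).mp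
        (by simpa [Subgroup.mem_subgroupOf] using hh)
      simpa [Subgroup.mem_subgroupOf] using this
    · intro hh
      have hhP : (t : G) * h * (t : G)⁻¹ ∈ (P : Subgroup G) := hSP hh
      have hP : h ∈ (P : Subgroup G) := by
        have := mul_mem (mul_mem (inv_mem t.2) hhP) t.2
        simpa [mul_assoc] using this
      have := (Subgroup.mem_normalizer_iff.mp htn (⟨h, hP⟩ : (P : Subgroup G))).mpr
        (by simpa [Subgroup.mem_subgroupOf] using hh)
      simpa [Subgroup.mem_subgroupOf] using this
  have htnS : (t : G) ∉ S := by
    intro h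
    exact htS (by simpa [Subgroup.mem_subgroupOf] using h)
  -- `t` does not normalize `E`
  have htE : (t : G) ∉ Subgroup.normalizer (E : Set G) := by
    intro h
    exact htnS (h2 ▸ ⟨htnorm, h⟩)
  set c : G := (t : G) with hc
  -- the subgroup of elements of `E` conjugated into `E` by `c`
  set K : Subgroup G := E ⊓ E.comap (MulAut.conj c).toMonoidHom with hK
  have hKE : K ≠ E := by
    intro h
    apply htE
    apply Subgroup.mem_normalizer_fintype
    intro n hn
    have : n ∈ K := h ▸ hn
    exact this.2
  obtain ⟨e, heE, heK⟩ : ∃ e ∈ E, e ∉ K := by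
    by_contra h
    push_neg at h
    exact hKE (le_antisymm inf_le_left fun x hx => h x hx)
  have he2 : e ^ 2 = 1 := by
    have := Monoid.pow_exponent_eq_one (⟨e, heE⟩ : E)
    rw [hE.exponent_two] at this
    exact congrArg (Subtype.val) this
  have hene : e ≠ 1 := fun h => heK (h ▸ one_mem K)
  have horder : orderOf e = 2 := orderOf_eq_prime he2 hene
  have hsE : c * e * c⁻¹ ∉ E := by
    intro h
    exact heK ⟨heE, by simpa [Subgroup.mem_comap] using h⟩
  have hsS : c * e * c⁻¹ ∈ S := (Subgroup.mem_normalizer_iff.mp htnorm e).mp (hES heE)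
  have hs2 : (c * e * c⁻¹) ^ 2 = 1 := by
    have : (c * e * c⁻¹) ^ 2 = c * e ^ 2 * c⁻¹ := by
      simp [pow_two, mul_assoc]
    rw [this, he2, mul_one, mul_inv_cancel]
  have hsne : c * e * c⁻¹ ≠ 1 := by
    intro h
    apply hene
    have : e = c⁻¹ * (c * e * c⁻¹) * c := by group
    rw [this, h]; group
  have horders : orderOf (c * e * c⁻¹) = 2 := orderOf_eq_prime hs2 hsne
  exact h1 e heE horder _ hsS hsE horders (isConj_iff.mpr ⟨c, rfl⟩)
end

section
/- Let G be a group and D a conjugacy class of involutions in G such that the product of any two elements of D has order at most 6. If t ∈ D and r ∈ G satisfy t·r·t = r⁻¹, then r² has order at most 6; in particular, the order of r is at most 12. -/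
/-- If `D` is a class of 6-transpositions, `t ∈ D` and `t·r·t = r⁻¹`, then `r²` has order
at most 6 and `r` has order at most 12. -/
theorem stmt_15 {G : Type*} [Group G] (D : Set G)
    (hDcc : ∃ g : G, D = {x : G | IsConj g x})
    (hDinv : ∀ d ∈ D, orderOf d = 2)
    (h6 : ∀ d₁ ∈ D, ∀ d₂ ∈ D, 0 < orderOf (d₁ * d₂) ∧ orderOf (d₁ * d₂) ≤ 6)
    (t : G) (ht : t ∈ D) (r : G) (htr : t * r * t = r⁻¹) :
    0 < orderOf (r ^ 2) ∧ orderOf (r ^ 2) ≤ 6 ∧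
      0 < orderOf r ∧ orderOf r ≤ 12 := by
  obtain ⟨g, hg⟩ := hDcc
  have ht' : r * t * r⁻¹ ∈ D := by
    rw [hg] at ht ⊢
    exact ht.trans (isConj_iff.mpr ⟨r, rfl⟩)
  have hprod := h6 t ht (r * t * r⁻¹) ht'
  have key : t * (r * t * r⁻¹) = (r ^ 2)⁻¹ := by
    have h1 : t * (r * t * r⁻¹) = (t * r * t) * r⁻¹ := by group
    rw [h1, htr]; group
  rw [key, orderOf_inv] at hprod
  obtain ⟨hpos, hle⟩ := hprod
  refine ⟨hpos, hle, ?_, ?_⟩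
  · have : (r ^ 2) ^ orderOf (r ^ 2) = 1 := pow_orderOf_eq_one _
    have h2 : r ^ (2 * orderOf (r ^ 2)) = 1 := by rwa [pow_mul]
    exact orderOf_pos_iff.mpr ((isOfFinOrder_iff_pow_eq_one.mpr ⟨2 * orderOf (r ^ 2), by positivity, h2⟩))
  · have h2 : r ^ (2 * orderOf (r ^ 2)) = 1 := by
      rw [pow_mul]; exact pow_orderOf_eq_one _
    have := orderOf_le_of_pow_eq_one (by positivity) h2
    omega
end
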